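/- Let q ∈ ℂ^×, V = ℂ², n ≥ 3, and let E be the endomorphism of V⊗V whose matrix in the basis e₁⊗e₁, e₁⊗e₂, e₂⊗e₁, e₂⊗e₂ has (2,2) entry −q⁻¹, (2,3) entry q, (3,2) entry q⁻¹, (3,3) entry −q, and zeros elsewhere. Let E_k denote the operator on V^{⊗n} acting by E on tensor factors k and k+1 and by identity elsewhere. Then E_k E_{k+1} E_k = E_k and E_{k+1} E_k E_{k+1} = E_{k+1} for 1 ≤ k ≤ n−2, and E_i E_j = E_j E_i whenever |i−j| > 1. -/

import Mathlib

open Matrix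

/-- The Temperley–Lieb generator `E` as an endomorphism of `ℂ² ⊗ ℂ²` in the basis
`e₁⊗e₁, e₁⊗e₂, e₂⊗e₁, e₂⊗e₂`. -/
noncomputable def TLE (q : ℂ) : Matrix (Fin 2 × Fin 2) (Fin 2 × Fin 2) ℂ :=
  Matrix.of fun p r =>
    if p = (0, 1) ∧ r = (0, 1) then -q⁻¹
    else if p = (0, 1) ∧ r = (1, 0) then q
    else if p = (1, 0) ∧ r = (0, 1) then q⁻¹
    else if p = (1, 0) ∧ r = (1, 0) then -q
    else 0

/-- `E_k` on `V^{⊗n}` (`V = ℂ²`, factors indexed `0,…,n−1`): acts by `E` on the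
`k`-th and `(k+1)`-th tensor factors and by the identity elsewhere. -/
noncomputable def Ek (q : ℂ) (n k : ℕ) (hk : k + 1 < n) :
    Matrix (Fin n → Fin 2) (Fin n → Fin 2) ℂ :=
  Matrix.of fun f g =>
    TLE q (f ⟨k, by omega⟩, f ⟨k + 1, hk⟩) (g ⟨k, by omega⟩, g ⟨k + 1, hk⟩) *
      ∏ i : Fin n, if i.val = k ∨ i.val = k + 1 then 1 else (if f i = g i then 1 else 0)


lemma sum_range_eq {α β : Type*} [Fintype α] [Fintype β] [DecidableEq β]
    (φ : α → β) (hφ : Function.Injective φ) (g : β → ℂ)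
    (h0 : ∀ b, (∀ a, φ a ≠ b) → g b = 0) :
    ∑ b, g b = ∑ a, g (φ a) := by
  rw [← Finset.sum_image (hφ.injOn)]
  symm
  apply Finset.sum_subset (Finset.subset_univ _)
  intro b _ hb
  apply h0
  intro a ha
  exact hb (Finset.mem_image.2 ⟨a, Finset.mem_univ a, ha⟩)


lemma delta_prod {n : ℕ} (P : Fin n → Prop) [DecidablePred P] (f g : Fin n → Fin 2) :
    (∏ i : Fin n, if P i then 1 else if f i = g i then (1:ℂ) else 0)
      = if ∀ i, ¬ P i → f i = g i then 1 else 0 := by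
  split_ifs with h
  · apply Finset.prod_eq_one
    intro i _
    by_cases hP : P i
    · simp [hP]
    · simp [hP, h i hP]
  · push_neg at h
    obtain ⟨i, hi, hne⟩ := h
    apply Finset.prod_eq_zero (Finset.mem_univ i)
    simp [hi, hne]

lemma Ek_apply (q : ℂ) (n k : ℕ) (hk : k + 1 < n) (f g : Fin n → Fin 2) :
    Ek q n k hk f g
      = TLE q (f ⟨k, by omega⟩, f ⟨k + 1, hk⟩) (g ⟨k, by omega⟩, g ⟨k + 1, hk⟩) *
        if (∀ i : Fin n, ¬ (i.val = k ∨ i.val = k + 1) → f i = g i) then 1 else 0 := by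
  show TLE q _ _ * _ = _
  rw [delta_prod]

lemma Ek_eq_zero_of (q : ℂ) (n k : ℕ) (hk : k + 1 < n) (f g : Fin n → Fin 2)
    (i : Fin n) (h1 : i.val ≠ k) (h2 : i.val ≠ k + 1) (h3 : f i ≠ g i) :
    Ek q n k hk f g = 0 := by
  rw [Ek_apply, if_neg, mul_zero]
  push_neg
  exact ⟨i, by tauto, h3⟩

lemma Ek_mul_disjoint (q : ℂ) (n i j : ℕ) (hi : i + 1 < n) (hj : j + 1 < n)
    (hd : i + 1 < j ∨ j + 1 < i) (f g : Fin n → Fin 2) :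
    (Ek q n i hi * Ek q n j hj) f g
      = TLE q (f ⟨i, by omega⟩, f ⟨i + 1, hi⟩) (g ⟨i, by omega⟩, g ⟨i + 1, hi⟩) *
        TLE q (f ⟨j, by omega⟩, f ⟨j + 1, hj⟩) (g ⟨j, by omega⟩, g ⟨j + 1, hj⟩) *
        if (∀ a : Fin n, ¬ (a.val = i ∨ a.val = i + 1 ∨ a.val = j ∨ a.val = j + 1)
            → f a = g a) then 1 else 0 := by
  rw [Matrix.mul_apply]
  have key := Fintype.sum_eq_single (f := fun h => Ek q n i hi f h * Ek q n j hj h g)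
      (fun a : Fin n => if a.val = i ∨ a.val = i + 1 then g a else f a) ?_
  · rw [key]
    show Ek q n i hi f _ * Ek q n j hj _ g = _
    rw [Ek_apply, Ek_apply]
    show TLE q _ ((if ((⟨i, by omega⟩ : Fin n).val = i ∨ ((⟨i, by omega⟩ : Fin n)).val = i + 1) then _ else _), _) * _ * _ = _
    rw [if_pos (Or.inl rfl), if_pos (Or.inr rfl),
      if_neg (show ¬((⟨j, by omega⟩ : Fin n).val = i ∨ (⟨j, by omega⟩ : Fin n).val = i + 1) by simp; omega),
      if_neg (show ¬((⟨j + 1, hj⟩ : Fin n).val = i ∨ (⟨j + 1, hj⟩ : Fin n).val = i + 1) by simp; omega)]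
    have d1 : (if (∀ a : Fin n, ¬ (a.val = i ∨ a.val = i + 1) →
        f a = if a.val = i ∨ a.val = i + 1 then g a else f a)
        then (1:ℂ) else 0) = 1 := by
      rw [if_pos]; intro a ha; simp only [if_neg ha]
    rw [d1]
    have d2 : (if (∀ a : Fin n, ¬ (a.val = j ∨ a.val = j + 1) →
        (if a.val = i ∨ a.val = i + 1 then g a else f a) = g a)
        then (1:ℂ) else 0)
      = if (∀ a : Fin n, ¬ (a.val = i ∨ a.val = i + 1 ∨ a.val = j ∨ a.val = j + 1)
            → f a = g a) then 1 else 0 := by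
      apply if_congr _ rfl rfl
      constructor
      · intro h a ha
        have := h a (by tauto)
        simpa only [if_neg (show ¬(a.val = i ∨ a.val = i + 1) by tauto)] using this
      · intro h a ha
        by_cases hP : a.val = i ∨ a.val = i + 1
        · simp only [if_pos hP]
        · simp only [if_neg hP]
          exact h a (by tauto)
    rw [d2]
    ring
  · intro h hne
    have : ∃ a : Fin n, h a ≠ (fun a : Fin n => if a.val = i ∨ a.val = i + 1 then g a else f a) a := by
      by_contra hc
      push_neg at hc
      exact hne (funext hc)
    obtain ⟨a, ha⟩ := this
    show Ek q n i hi f h * Ek q n j hj h g = 0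
    simp only at ha
    by_cases hP : a.val = i ∨ a.val = i + 1
    · have : h a ≠ g a := by simpa only [if_pos hP] using ha
      rw [Ek_eq_zero_of q n j hj h g a (by omega) (by omega) this, mul_zero]
    · have : h a ≠ f a := by simpa only [if_neg hP] using ha
      rw [Ek_eq_zero_of q n i hi f h a (by omega) (by omega) (Ne.symm this), zero_mul]

def upd {n : ℕ} (k : ℕ) (c : Fin n → Fin 2) (p : Fin 2 × Fin 2) : Fin n → Fin 2 :=
  fun x => if x.val = k then p.1 else if x.val = k + 1 then p.2 else c x

lemma upd_fst {n : ℕ} (k : ℕ) (c : Fin n → Fin 2) (p : Fin 2 × Fin 2) (h : k < n) :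
    upd k c p ⟨k, h⟩ = p.1 := if_pos rfl

lemma upd_snd {n : ℕ} (k : ℕ) (c : Fin n → Fin 2) (p : Fin 2 × Fin 2) (h : k + 1 < n) :
    upd k c p ⟨k + 1, h⟩ = p.2 := by
  unfold upd
  rw [if_neg (by simp), if_pos rfl]

lemma upd_other {n : ℕ} (k : ℕ) (c : Fin n → Fin 2) (p : Fin 2 × Fin 2) (x : Fin n)
    (h1 : x.val ≠ k) (h2 : x.val ≠ k + 1) : upd k c p x = c x := by
  unfold upd
  rw [if_neg h1, if_neg h2]

lemma upd_inj {n : ℕ} (k : ℕ) (c : Fin n → Fin 2) (h : k + 1 < n) :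
    Function.Injective (upd k c) := by
  intro p p' hpp
  have h1 := congrFun hpp ⟨k, by omega⟩
  have h2 := congrFun hpp ⟨k + 1, h⟩
  rw [upd_fst _ _ _ (by omega), upd_fst _ _ _ (by omega)] at h1
  rw [upd_snd _ _ _ h, upd_snd _ _ _ h] at h2
  exact Prod.ext h1 h2

/-- If `h` is not in the range of `upd k c`, there is a coordinate outside `{k, k+1}`
where `h` differs from `c`. -/
lemma upd_not_range {n : ℕ} (k : ℕ) (c : Fin n → Fin 2) (hkn : k + 1 < n)
    (h : Fin n → Fin 2) (hr : ∀ p, upd k c p ≠ h) :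
    ∃ x : Fin n, x.val ≠ k ∧ x.val ≠ k + 1 ∧ h x ≠ c x := by
  have := hr (h ⟨k, by omega⟩, h ⟨k + 1, hkn⟩)
  have hx : ∃ x : Fin n, upd k c (h ⟨k, by omega⟩, h ⟨k + 1, hkn⟩) x ≠ h x := by
    by_contra hc
    push_neg at hc
    exact this (funext hc)
  obtain ⟨x, hx⟩ := hx
  have h1 : x.val ≠ k := by
    intro hk
    apply hx
    have : x = ⟨k, by omega⟩ := Fin.ext hk
    rw [this, upd_fst _ _ _ (by omega)]
  have h2 : x.val ≠ k + 1 := by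
    intro hk
    apply hx
    have : x = ⟨k + 1, hkn⟩ := Fin.ext hk
    rw [this, upd_snd _ _ _ hkn]
  refine ⟨x, h1, h2, ?_⟩
  intro he
  exact hx (by rw [upd_other _ _ _ _ h1 h2, he])

lemma triple_entry (q : ℂ) (n r s : ℕ) (hr : r + 1 < n) (hs : s + 1 < n)
    (f g : Fin n → Fin 2) :
    (Ek q n r hr * Ek q n s hs * Ek q n r hr) f g
      = ∑ p : Fin 2 × Fin 2, ∑ p' : Fin 2 × Fin 2,
          Ek q n r hr f (upd r f p') * Ek q n s hs (upd r f p') (upd r g p) *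
            Ek q n r hr (upd r g p) g := by
  rw [Matrix.mul_apply]
  rw [sum_range_eq (upd r g) (upd_inj r g hr)
      (fun h => (Ek q n r hr * Ek q n s hs) f h * Ek q n r hr h g) ?_]
  · apply Finset.sum_congr rfl
    intro p _
    rw [Matrix.mul_apply]
    rw [sum_range_eq (upd r f) (upd_inj r f hr)
        (fun h' => Ek q n r hr f h' * Ek q n s hs h' (upd r g p)) ?_]
    · rw [Finset.sum_mul]
    · intro h' hh'
      obtain ⟨x, h1, h2, h3⟩ := upd_not_range r f hr h' hh'
      show Ek q n r hr f h' * Ek q n s hs h' (upd r g p) = 0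
      rw [Ek_eq_zero_of q n r hr f h' x h1 h2 (Ne.symm h3), zero_mul]
  · intro h hh
    obtain ⟨x, h1, h2, h3⟩ := upd_not_range r g hr h hh
    show (Ek q n r hr * Ek q n s hs) f h * Ek q n r hr h g = 0
    rw [Ek_eq_zero_of q n r hr h g x h1 h2 h3, mul_zero]

lemma ite_and_one (P Q : Prop) [Decidable P] [Decidable Q] :
    (if P ∧ Q then (1:ℂ) else 0) = (if P then 1 else 0) * (if Q then 1 else 0) := by
  split_ifs <;> simp_all

lemma TLE_apply (q : ℂ) (p r : Fin 2 × Fin 2) :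
    TLE q p r = if p = (0, 1) ∧ r = (0, 1) then -q⁻¹
    else if p = (0, 1) ∧ r = (1, 0) then q
    else if p = (1, 0) ∧ r = (0, 1) then q⁻¹
    else if p = (1, 0) ∧ r = (1, 0) then -q
    else 0 := rfl

set_option maxHeartbeats 1000000 in
lemma TL_sum1 (q : ℂ) (hq : q ≠ 0) (x1 x2 y1 y2 u v : Fin 2) :
    ∑ a : Fin 2, ∑ b : Fin 2, ∑ c : Fin 2,
      TLE q (x1,x2) (a,b) * TLE q (b,u) (c,v) * TLE q (a,c) (y1,y2)
      = TLE q (x1,x2) (y1,y2) * (if u = v then 1 else 0) := by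
  fin_cases x1 <;> fin_cases x2 <;> fin_cases y1 <;> fin_cases y2 <;> fin_cases u <;> fin_cases v <;>
    simp (config := {decide := true}) only [TLE_apply, Fin.sum_univ_two, Prod.mk.injEq, if_true, if_false] <;>
    field_simp <;> ring

set_option maxHeartbeats 1000000 in
lemma TL_fin1 (q : ℂ) (hq : q ≠ 0) (x1 x2 y1 y2 u v : Fin 2) (r : ℂ) :
    ∑ p : Fin 2 × Fin 2, ∑ p' : Fin 2 × Fin 2,
      TLE q (x1, x2) (p'.1, p'.2) *
          (TLE q (p'.2, u) (p.2, v) * ((if p'.1 = p.1 then 1 else 0) * r)) *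
        TLE q (p.1, p.2) (y1, y2)
      = TLE q (x1, x2) (y1, y2) * (r * if u = v then 1 else 0) := by
  have h1 := TL_sum1 q hq x1 x2 y1 y2 u v
  have h2 : ∑ p : Fin 2 × Fin 2, ∑ p' : Fin 2 × Fin 2,
      TLE q (x1, x2) (p'.1, p'.2) *
          (TLE q (p'.2, u) (p.2, v) * ((if p'.1 = p.1 then 1 else 0) * r)) *
        TLE q (p.1, p.2) (y1, y2)
      = (∑ a : Fin 2, ∑ b : Fin 2, ∑ c : Fin 2,
          TLE q (x1,x2) (a,b) * TLE q (b,u) (c,v) * TLE q (a,c) (y1,y2)) * r := by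
    simp only [Fintype.sum_prod_type, Fin.sum_univ_two]
    norm_num
    ring
  rw [h2, h1]
  ring

lemma braid1 (q : ℂ) (hq : q ≠ 0) (n k : ℕ) (hk1 : k + 1 < n) (hk2 : k + 1 + 1 < n) :
    Ek q n k hk1 * Ek q n (k + 1) hk2 * Ek q n k hk1 = Ek q n k hk1 := by
  ext f g
  rw [triple_entry]
  have eA : ∀ p' : Fin 2 × Fin 2, Ek q n k hk1 f (upd k f p')
      = TLE q (f ⟨k, by omega⟩, f ⟨k + 1, hk1⟩) (p'.1, p'.2) := by
    intro p'
    rw [Ek_apply, upd_fst _ _ _ (by omega), upd_snd _ _ _ hk1, if_pos, mul_one]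
    intro x hx
    rw [upd_other _ _ _ _ (by tauto) (by tauto)]
  have eC : ∀ p : Fin 2 × Fin 2, Ek q n k hk1 (upd k g p) g
      = TLE q (p.1, p.2) (g ⟨k, by omega⟩, g ⟨k + 1, hk1⟩) := by
    intro p
    rw [Ek_apply, upd_fst _ _ _ (by omega), upd_snd _ _ _ hk1, if_pos, mul_one]
    intro x hx
    rw [upd_other _ _ _ _ (by tauto) (by tauto)]
  have eB : ∀ p' p : Fin 2 × Fin 2, Ek q n (k + 1) hk2 (upd k f p') (upd k g p)
      = TLE q (p'.2, f ⟨k + 1 + 1, hk2⟩) (p.2, g ⟨k + 1 + 1, hk2⟩) *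
        ((if p'.1 = p.1 then (1:ℂ) else 0) *
          (if (∀ x : Fin n, ¬(x.val = k ∨ x.val = k + 1 ∨ x.val = k + 1 + 1) → f x = g x)
            then 1 else 0)) := by
    intro p' p
    rw [Ek_apply, upd_snd _ _ _ (by omega), upd_snd _ _ _ (by omega),
      upd_other k f p' ⟨k + 1 + 1, hk2⟩ (by simp; omega) (by simp),
      upd_other k g p ⟨k + 1 + 1, hk2⟩ (by simp; omega) (by simp),
      ← ite_and_one]
    congr 1
    apply if_congr _ rfl rfl
    constructor
    · intro h
      constructor
      · have := h ⟨k, by omega⟩ (by simp; omega)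
        rwa [upd_fst _ _ _ (by omega), upd_fst _ _ _ (by omega)] at this
      · intro x hx
        have := h x (by tauto)
        rwa [upd_other _ _ _ _ (by tauto) (by tauto),
          upd_other _ _ _ _ (by tauto) (by tauto)] at this
    · rintro ⟨h1, h2⟩ x hx
      by_cases hxk : x.val = k
      · have : x = ⟨k, by omega⟩ := Fin.ext hxk
        rw [this, upd_fst _ _ _ (by omega), upd_fst _ _ _ (by omega)]
        exact h1
      · rw [upd_other _ _ _ _ hxk (by tauto), upd_other _ _ _ _ hxk (by tauto)]
        exact h2 x (by tauto)
  simp only [eA, eB, eC]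
  have split : Ek q n k hk1 f g
      = TLE q (f ⟨k, by omega⟩, f ⟨k + 1, hk1⟩) (g ⟨k, by omega⟩, g ⟨k + 1, hk1⟩) *
        ((if (∀ x : Fin n, ¬(x.val = k ∨ x.val = k + 1 ∨ x.val = k + 1 + 1) → f x = g x)
            then 1 else 0) *
          (if f ⟨k + 1 + 1, hk2⟩ = g ⟨k + 1 + 1, hk2⟩ then (1:ℂ) else 0)) := by
    rw [Ek_apply, ← ite_and_one]
    congr 1
    apply if_congr _ rfl rfl
    constructor
    · intro h
      exact ⟨fun x hx => h x (by tauto), h ⟨k + 1 + 1, hk2⟩ (by simp; omega)⟩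
    · rintro ⟨h1, h2⟩ x hx
      by_cases hx2 : x.val = k + 1 + 1
      · have : x = ⟨k + 1 + 1, hk2⟩ := Fin.ext hx2
        rw [this]; exact h2
      · exact h1 x (by tauto)
  rw [split]
  generalize (if ∀ x : Fin n, ¬(↑x = k ∨ ↑x = k + 1 ∨ ↑x = k + 1 + 1) → f x = g x
      then (1:ℂ) else 0) = r
  generalize f ⟨k + 1 + 1, hk2⟩ = u
  generalize g ⟨k + 1 + 1, hk2⟩ = v
  generalize f ⟨k, by omega⟩ = x1
  generalize f ⟨k + 1, hk1⟩ = x2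
  generalize g ⟨k, by omega⟩ = y1
  generalize g ⟨k + 1, hk1⟩ = y2
  exact TL_fin1 q hq x1 x2 y1 y2 u v r

set_option maxHeartbeats 1000000 in
lemma TL_sum2 (q : ℂ) (hq : q ≠ 0) (x2 x3 y2 y3 u v : Fin 2) :
    ∑ a : Fin 2, ∑ b : Fin 2, ∑ c : Fin 2,
      TLE q (x2,x3) (a,b) * TLE q (u,a) (v,c) * TLE q (c,b) (y2,y3)
      = TLE q (x2,x3) (y2,y3) * (if u = v then 1 else 0) := by
  fin_cases x2 <;> fin_cases x3 <;> fin_cases y2 <;> fin_cases y3 <;> fin_cases u <;> fin_cases v <;>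
    simp (config := {decide := true}) only [TLE_apply, Fin.sum_univ_two, Prod.mk.injEq, if_true, if_false] <;>
    field_simp <;> ring

set_option maxHeartbeats 1000000 in
set_option maxHeartbeats 1000000 in
lemma TL_fin2 (q : ℂ) (hq : q ≠ 0) (x2 x3 y2 y3 u v : Fin 2) (r : ℂ) :
    ∑ p : Fin 2 × Fin 2, ∑ p' : Fin 2 × Fin 2,
      TLE q (x2, x3) (p'.1, p'.2) *
          (TLE q (u, p'.1) (v, p.1) * ((if p'.2 = p.2 then 1 else 0) * r)) *
        TLE q (p.1, p.2) (y2, y3)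
      = TLE q (x2, x3) (y2, y3) * (r * if u = v then 1 else 0) := by
  have h1 := TL_sum2 q hq x2 x3 y2 y3 u v
  have h2 : ∑ p : Fin 2 × Fin 2, ∑ p' : Fin 2 × Fin 2,
      TLE q (x2, x3) (p'.1, p'.2) *
          (TLE q (u, p'.1) (v, p.1) * ((if p'.2 = p.2 then 1 else 0) * r)) *
        TLE q (p.1, p.2) (y2, y3)
      = (∑ a : Fin 2, ∑ b : Fin 2, ∑ c : Fin 2,
          TLE q (x2,x3) (a,b) * TLE q (u,a) (v,c) * TLE q (c,b) (y2,y3)) * r := by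
    simp only [Fintype.sum_prod_type, Fin.sum_univ_two]
    norm_num
    ring
  rw [h2, h1]
  ring

lemma braid2 (q : ℂ) (hq : q ≠ 0) (n k : ℕ) (hk1 : k + 1 < n) (hk2 : k + 1 + 1 < n) :
    Ek q n (k + 1) hk2 * Ek q n k hk1 * Ek q n (k + 1) hk2 = Ek q n (k + 1) hk2 := by
  ext f g
  rw [triple_entry]
  have eA : ∀ p' : Fin 2 × Fin 2, Ek q n (k + 1) hk2 f (upd (k + 1) f p')
      = TLE q (f ⟨k + 1, by omega⟩, f ⟨k + 1 + 1, hk2⟩) (p'.1, p'.2) := by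
    intro p'
    rw [Ek_apply, upd_fst _ _ _ (by omega), upd_snd _ _ _ hk2, if_pos, mul_one]
    intro x hx
    rw [upd_other _ _ _ _ (by tauto) (by tauto)]
  have eC : ∀ p : Fin 2 × Fin 2, Ek q n (k + 1) hk2 (upd (k + 1) g p) g
      = TLE q (p.1, p.2) (g ⟨k + 1, by omega⟩, g ⟨k + 1 + 1, hk2⟩) := by
    intro p
    rw [Ek_apply, upd_fst _ _ _ (by omega), upd_snd _ _ _ hk2, if_pos, mul_one]
    intro x hx
    rw [upd_other _ _ _ _ (by tauto) (by tauto)]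
  have eB : ∀ p' p : Fin 2 × Fin 2, Ek q n k hk1 (upd (k + 1) f p') (upd (k + 1) g p)
      = TLE q (f ⟨k, by omega⟩, p'.1) (g ⟨k, by omega⟩, p.1) *
        ((if p'.2 = p.2 then (1:ℂ) else 0) *
          (if (∀ x : Fin n, ¬(x.val = k ∨ x.val = k + 1 ∨ x.val = k + 1 + 1) → f x = g x)
            then 1 else 0)) := by
    intro p' p
    rw [Ek_apply,
      upd_other (k + 1) f p' ⟨k, by omega⟩ (by simp) (by simp; omega),
      upd_other (k + 1) g p ⟨k, by omega⟩ (by simp) (by simp; omega),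
      upd_fst _ _ _ (by omega), upd_fst _ _ _ (by omega), ← ite_and_one]
    congr 1
    apply if_congr _ rfl rfl
    constructor
    · intro h
      constructor
      · have := h ⟨k + 1 + 1, hk2⟩ (by simp; omega)
        rwa [upd_snd _ _ _ hk2, upd_snd _ _ _ hk2] at this
      · intro x hx
        have := h x (by tauto)
        rwa [upd_other _ _ _ _ (by tauto) (by tauto),
          upd_other _ _ _ _ (by tauto) (by tauto)] at this
    · rintro ⟨h1, h2⟩ x hx
      by_cases hxk : x.val = k + 1 + 1
      · have hxe : x = ⟨k + 1 + 1, hk2⟩ := Fin.ext hxk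
        rw [hxe, upd_snd _ _ _ hk2, upd_snd _ _ _ hk2]
        exact h1
      · rw [upd_other _ _ _ _ (by tauto) hxk, upd_other _ _ _ _ (by tauto) hxk]
        exact h2 x (by tauto)
  simp only [eA, eB, eC]
  have split : Ek q n (k + 1) hk2 f g
      = TLE q (f ⟨k + 1, by omega⟩, f ⟨k + 1 + 1, hk2⟩)
          (g ⟨k + 1, by omega⟩, g ⟨k + 1 + 1, hk2⟩) *
        ((if (∀ x : Fin n, ¬(x.val = k ∨ x.val = k + 1 ∨ x.val = k + 1 + 1) → f x = g x)
            then 1 else 0) *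
          (if f ⟨k, by omega⟩ = g ⟨k, by omega⟩ then (1:ℂ) else 0)) := by
    rw [Ek_apply, ← ite_and_one]
    congr 1
    apply if_congr _ rfl rfl
    constructor
    · intro h
      exact ⟨fun x hx => h x (by tauto), h ⟨k, by omega⟩ (by simp; omega)⟩
    · rintro ⟨h1, h2⟩ x hx
      by_cases hxk : x.val = k
      · have : x = ⟨k, by omega⟩ := Fin.ext hxk
        rw [this]; exact h2
      · exact h1 x (by tauto)
  rw [split]
  generalize (if ∀ x : Fin n, ¬(↑x = k ∨ ↑x = k + 1 ∨ ↑x = k + 1 + 1) → f x = g x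
      then (1:ℂ) else 0) = r
  generalize f ⟨k, by omega⟩ = u
  generalize g ⟨k, by omega⟩ = v
  generalize f ⟨k + 1, by omega⟩ = x2
  generalize f ⟨k + 1 + 1, hk2⟩ = x3
  generalize g ⟨k + 1, by omega⟩ = y2
  generalize g ⟨k + 1 + 1, hk2⟩ = y3
  exact TL_fin2 q hq x2 x3 y2 y3 u v r

theorem stmt16 (q : ℂ) (hq : q ≠ 0) (n : ℕ) (hn : 3 ≤ n) :
    (∀ k (hk : k + 2 < n),
      Ek q n k (by omega) * Ek q n (k + 1) (by omega) * Ek q n k (by omega)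
        = Ek q n k (by omega) ∧
      Ek q n (k + 1) (by omega) * Ek q n k (by omega) * Ek q n (k + 1) (by omega)
        = Ek q n (k + 1) (by omega)) ∧
    (∀ i j (hi : i + 1 < n) (hj : j + 1 < n), (i + 1 < j ∨ j + 1 < i) →
      Ek q n i hi * Ek q n j hj = Ek q n j hj * Ek q n i hi) := by
  refine ⟨fun k hk => ⟨?_, ?_⟩, fun i j hi hj hd => ?_⟩
  · exact braid1 q hq n k (by omega) (by omega)
  · exact braid2 q hq n k (by omega) (by omega)
  · ext f g
    rw [Ek_mul_disjoint q n i j hi hj hd f g, Ek_mul_disjoint q n j i hj hi (Or.symm hd) f g]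
    rw [show (if (∀ a : Fin n, ¬(a.val = j ∨ a.val = j + 1 ∨ a.val = i ∨ a.val = i + 1)
          → f a = g a) then (1:ℂ) else 0)
        = if (∀ a : Fin n, ¬(a.val = i ∨ a.val = i + 1 ∨ a.val = j ∨ a.val = j + 1)
          → f a = g a) then 1 else 0
      from if_congr (by constructor <;> (intro h a ha; exact h a (by tauto))) rfl rfl]
    ring
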